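/- arXiv:1510.02423 — 11 statements merged into one kernel-verified Lean document; each statement's English description precedes it below -/
import Mathlib

section
/- The representation of ℤ on D (with the generator 1 acting by the shift U) contains no irreducible subrepresentations: there is no nonzero ℂ-subspace W ⊆ D with U(W) = W such that the only subspaces W' ⊆ W with U(W') = W' are W' = 0 and W' = W. -/
/-- The space `D`: sequences `ℤ → ℂ` vanishing for all sufficiently small indices and
constant for all sufficiently large indices (the model of `D(L)^{O_L^*}`). -/
noncomputable def Dspace : Submodule ℂ (ℤ → ℂ) where
  carrier := {c | (∃ N : ℤ, ∀ n < N, c n = 0) ∧ ∃ e : ℂ, ∃ M : ℤ, ∀ n ≥ M, c n = e}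
  add_mem' := by
    rintro a b ⟨⟨N₁, h₁⟩, e₁, M₁, k₁⟩ ⟨⟨N₂, h₂⟩, e₂, M₂, k₂⟩
    refine ⟨⟨min N₁ N₂, fun n hn => ?_⟩, e₁ + e₂, max M₁ M₂, fun n hn => ?_⟩
    · have ha := h₁ n (lt_of_lt_of_le hn (min_le_left _ _))
      have hb := h₂ n (lt_of_lt_of_le hn (min_le_right _ _))
      simp [Pi.add_apply, ha, hb]
    · have ha := k₁ n (le_trans (le_max_left _ _) hn)
      have hb := k₂ n (le_trans (le_max_right _ _) hn)
      simp [Pi.add_apply, ha, hb]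
  zero_mem' := ⟨⟨0, fun _ _ => rfl⟩, 0, 0, fun _ _ => rfl⟩
  smul_mem' := by
    rintro s a ⟨⟨N, h⟩, e, M, k⟩
    refine ⟨⟨N, fun n hn => ?_⟩, s * e, M, fun n hn => ?_⟩
    · simp [Pi.smul_apply, h n hn]
    · simp [Pi.smul_apply, k n hn]

/-- The shift operator `U`, `(Uc)_n = c_{n−1}`, as a ℂ-linear endomorphism of `ℤ → ℂ`. -/
def shiftU : (ℤ → ℂ) →ₗ[ℂ] (ℤ → ℂ) where
  toFun c := fun n => c (n - 1)
  map_add' := fun _ _ => rfl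
  map_smul' := fun _ _ => rfl

/-- Any sequence with `c (n-1) = c n` everywhere that vanishes for small `n` is zero. -/
lemma shift_fixed_eq_zero (c : ℤ → ℂ) (h : ∀ n : ℤ, c (n - 1) = c n)
    (N : ℤ) (h0 : ∀ n < N, c n = 0) : c = 0 := by
  funext n
  have key : ∀ k : ℕ, c (n - k) = c n := by
    intro k
    induction k with
    | zero => simp
    | succ k ih =>
      have : n - (k + 1 : ℕ) = (n - k) - 1 := by push_cast; ring
      rw [this, h (n - k), ih]
  have hk : (n - N + 1 : ℤ) ≤ ((n - N + 1).toNat : ℤ) := Int.self_le_toNat _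
  have : c (n - ((n - N + 1).toNat : ℤ)) = 0 := h0 _ (by omega)
  rw [key] at this
  simpa using this

/-- The difference operator `T = U - 1` as a plain function. -/
def Tfun (c : ℤ → ℂ) : ℤ → ℂ := fun n => c (n - 1) - c n

/-- `T` as a linear endomorphism. -/
noncomputable def Tlin : Module.End ℂ (ℤ → ℂ) := shiftU - LinearMap.id

lemma Tlin_apply (c : ℤ → ℂ) : Tlin c = Tfun c := rfl

lemma iterate_low (w : ℤ → ℂ) (a : ℤ) (h0 : ∀ n < a, w n = 0) (m : ℕ) :
    (∀ n < a, (Tfun^[m] w) n = 0) ∧ (Tfun^[m] w) a = (-1 : ℂ) ^ m * w a := by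
  induction m with
  | zero => simpa using h0
  | succ m ih =>
    rw [Function.iterate_succ_apply']
    constructor
    · intro n hn
      show (Tfun^[m] w) (n - 1) - (Tfun^[m] w) n = 0
      rw [ih.1 n hn, ih.1 (n - 1) (by omega), sub_zero]
    · show (Tfun^[m] w) (a - 1) - (Tfun^[m] w) a = _
      rw [ih.1 (a - 1) (by omega), ih.2]
      ring

lemma iterate_high (w : ℤ → ℂ) (b : ℤ) (h0 : ∀ n > b, w n = 0) (m : ℕ) :
    (∀ n > b + m, (Tfun^[m] w) n = 0) ∧ (Tfun^[m] w) (b + m) = w b := by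
  induction m with
  | zero => simpa using h0
  | succ m ih =>
    rw [Function.iterate_succ_apply']
    constructor
    · intro n hn
      show (Tfun^[m] w) (n - 1) - (Tfun^[m] w) n = 0
      have h1 : (b : ℤ) + (m : ℕ) < n - 1 := by push_cast at hn ⊢; omega
      have h2 : (b : ℤ) + (m : ℕ) < n := by push_cast at hn ⊢; omega
      rw [ih.1 _ h1, ih.1 _ h2, sub_zero]
    · have hbm : b + ((m : ℕ) + 1 : ℕ) = (b + m) + 1 := by push_cast; ring
      rw [hbm]
      show (Tfun^[m] w) (b + m + 1 - 1) - (Tfun^[m] w) (b + m + 1) = w b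
      rw [show b + (m : ℤ) + 1 - 1 = b + m by ring, ih.2, ih.1 (b + m + 1) (by omega),
        sub_zero]

/-- The submodule of sequences vanishing for all large indices. -/
noncomputable def Zspace : Submodule ℂ (ℤ → ℂ) where
  carrier := {c | ∃ M : ℤ, ∀ n ≥ M, c n = 0}
  add_mem' := by
    rintro a b ⟨M₁, h₁⟩ ⟨M₂, h₂⟩
    exact ⟨max M₁ M₂, fun n hn => by
      simp [h₁ n (le_trans (le_max_left _ _) hn), h₂ n (le_trans (le_max_right _ _) hn)]⟩
  zero_mem' := ⟨0, fun _ _ => rfl⟩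
  smul_mem' := by
    rintro s a ⟨M, h⟩
    exact ⟨M, fun n hn => by simp [h n hn]⟩

/-- The representation of `ℤ` on `D` (the generator acting by the shift `U`) contains no
irreducible subrepresentations: there is no nonzero subspace `W ⊆ D` with `U(W) = W` whose
only `U`-stable subspaces are `0` and `W`. -/
theorem statement2 :
    ¬ ∃ W : Submodule ℂ (ℤ → ℂ), W ≤ Dspace ∧ W ≠ ⊥ ∧ Submodule.map shiftU W = W ∧
      ∀ W' : Submodule ℂ (ℤ → ℂ), W' ≤ W → Submodule.map shiftU W' = W' →
        W' = ⊥ ∨ W' = W := by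
  rintro ⟨W, hWD, hW0, hWU, hirr⟩
  -- basic facts about U on W
  have hUmem : ∀ w ∈ W, shiftU w ∈ W := fun w hw => hWU ▸ Submodule.mem_map_of_mem hw
  have hUsurj : ∀ w ∈ W, ∃ v ∈ W, shiftU v = w := by
    intro w hw
    rw [← hWU] at hw
    obtain ⟨v, hv, hv'⟩ := hw
    exact ⟨v, hv, hv'⟩
  -- a useful fact: if `Tlin w = 0` for `w ∈ W` then `w = 0`
  have hTzero : ∀ w ∈ W, Tlin w = 0 → w = 0 := by
    intro w hw h
    obtain ⟨⟨N, hN⟩, -⟩ := hWD hw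
    refine shift_fixed_eq_zero w (fun n => ?_) N hN
    have := congrFun h n
    simp only [Tlin_apply, Tfun, Pi.zero_apply] at this
    linear_combination this
  -- Step 1: W consists of sequences vanishing at +∞.
  have hWZ : W ≤ Zspace := by
    have hstab : Submodule.map shiftU (W ⊓ Zspace) = W ⊓ Zspace := by
      apply le_antisymm
      · rintro x ⟨v, ⟨hvW, M, hvM⟩, rfl⟩
        exact ⟨hUmem v hvW, M + 1, fun n hn => hvM (n - 1) (by omega)⟩
      · rintro w ⟨hwW, M, hwM⟩
        obtain ⟨v, hvW, rfl⟩ := hUsurj w hwW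
        refine ⟨v, ⟨hvW, M - 1, fun n hn => ?_⟩, rfl⟩
        have := hwM (n + 1) (by omega)
        simpa [shiftU] using this
    rcases hirr (W ⊓ Zspace) inf_le_left hstab with hbot | heq
    · -- W ⊓ Zspace = ⊥ : contradiction since T w lands there
      exfalso
      obtain ⟨w, hwW, hw0⟩ := Submodule.exists_mem_ne_zero_of_ne_bot hW0
      have hTwW : Tlin w ∈ W := by
        have : Tlin w = shiftU w - w := rfl
        rw [this]; exact sub_mem (hUmem w hwW) hwW
      have hTwZ : Tlin w ∈ Zspace := by
        obtain ⟨-, e, M, hM⟩ := hWD hwW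
        exact ⟨M + 1, fun n hn => by
          show w (n - 1) - w n = 0
          rw [hM (n - 1) (by omega), hM n (by omega), sub_self]⟩
      have : Tlin w = 0 := by
        have := hbot ▸ (Submodule.mem_inf.mpr ⟨hTwW, hTwZ⟩)
        simpa using this
      exact hw0 (hTzero w hwW this)
    · exact heq ▸ inf_le_right
  -- Step 2: map Tlin W = W
  have hcomm : shiftU ∘ₗ Tlin = Tlin ∘ₗ shiftU := by
    ext c; rfl
  have hTW_le : Submodule.map Tlin W ≤ W := by
    rintro x ⟨w, hw, rfl⟩
    have : Tlin w = shiftU w - w := rfl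
    rw [this]; exact sub_mem (hUmem w hw) hw
  have hTW_stab : Submodule.map shiftU (Submodule.map Tlin W) = Submodule.map Tlin W := by
    rw [← Submodule.map_comp, hcomm, Submodule.map_comp, hWU]
  have hTW : Submodule.map Tlin W = W := by
    rcases hirr _ hTW_le hTW_stab with hbot | heq
    · exfalso
      obtain ⟨w, hwW, hw0⟩ := Submodule.exists_mem_ne_zero_of_ne_bot hW0
      apply hw0
      apply hTzero w hwW
      have : Tlin w ∈ (⊥ : Submodule ℂ (ℤ → ℂ)) := hbot ▸ Submodule.mem_map_of_mem hwW
      simpa using this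
    · exact heq
  have hTkW : ∀ k : ℕ, Submodule.map (Tlin ^ k) W = W := by
    intro k
    induction k with
    | zero => exact Submodule.map_id W
    | succ k ih =>
      have : Tlin ^ (k + 1) = (Tlin ^ k) ∘ₗ Tlin := by rw [pow_succ]; rfl
      rw [this, Submodule.map_comp, hTW, ih]
  -- Step 3: support-width contradiction
  obtain ⟨c, hcW, hc0⟩ := Submodule.exists_mem_ne_zero_of_ne_bot hW0
  obtain ⟨⟨N, hN⟩, -⟩ := hWD hcW
  obtain ⟨M, hM⟩ := hWZ hcW
  have hcsupp : ∃ n, c n ≠ 0 := by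
    by_contra h
    push_neg at h
    exact hc0 (funext fun n => h n)
  obtain ⟨b, hb, hbmax⟩ := Int.exists_greatest_of_bdd
    (P := fun n => c n ≠ 0) ⟨M, fun z hz => by by_contra h; exact hz (hM z (by omega))⟩ hcsupp
  obtain ⟨a, ha, hamin⟩ := Int.exists_least_of_bdd
    (P := fun n => c n ≠ 0) ⟨N, fun z hz => by by_contra h; exact hz (hN z (by omega))⟩ hcsupp
  have hab : a ≤ b := hamin b hb
  set k : ℕ := (b - a + 1).toNat with hk
  have hkval : (k : ℤ) = b - a + 1 := Int.toNat_of_nonneg (by omega)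
  -- get w with (Tlin ^ k) w = c
  have : c ∈ Submodule.map (Tlin ^ k) W := (hTkW k).symm ▸ hcW
  obtain ⟨w, hwW, hwc⟩ := this
  have hcoe : ⇑Tlin = Tfun := funext fun _ => rfl
  have hwit : Tfun^[k] w = c := by
    rw [← hwc, Module.End.pow_apply, hcoe]
  have hw0 : w ≠ 0 := by rintro rfl; exact hc0 (by rw [← hwc, map_zero])
  obtain ⟨Nw, hNw⟩ := (hWD hwW).1
  obtain ⟨Mw, hMw⟩ := hWZ hwW
  have hwsupp : ∃ n, w n ≠ 0 := by
    by_contra h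
    push_neg at h
    exact hw0 (funext fun n => h n)
  obtain ⟨bw, hbw, hbwmax⟩ := Int.exists_greatest_of_bdd
    (P := fun n => w n ≠ 0) ⟨Mw, fun z hz => by by_contra h; exact hz (hMw z (by omega))⟩ hwsupp
  obtain ⟨aw, haw, hawmin⟩ := Int.exists_least_of_bdd
    (P := fun n => w n ≠ 0) ⟨Nw, fun z hz => by by_contra h; exact hz (hNw z (by omega))⟩ hwsupp
  have hawbw : aw ≤ bw := hawmin bw hbw
  have hwlow : ∀ n < aw, w n = 0 := by
    intro n hn; by_contra h; exact absurd (hawmin n h) (by omega)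
  have hwhigh : ∀ n > bw, w n = 0 := by
    intro n hn; by_contra h; exact absurd (hbwmax n h) (by omega)
  -- c aw ≠ 0, so a ≤ aw
  have hcaw : c aw ≠ 0 := by
    rw [← hwit, (iterate_low w aw hwlow k).2]
    exact mul_ne_zero (pow_ne_zero _ (by norm_num)) haw
  have h1 : a ≤ aw := hamin aw hcaw
  -- c (bw + k) ≠ 0, so bw + k ≤ b
  have hcbk : c (bw + k) ≠ 0 := by
    rw [← hwit, (iterate_high w bw hwhigh k).2]
    exact hbw
  have h2 : bw + (k : ℤ) ≤ b := hbmax _ hcbk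
  omega
end

section
/- For c ∈ D and φ ∈ D', choose any integers N < M such that c_n = 0 for all n < N and c_n = c_M for all n ≥ M, and set ⟨c, φ⟩ = Σ_{i=N}^{M−1} (q^{M−i} − q^{M−i−1})·c_i·φ^{(M)}_i + c_M·φ^{(M)}_M. Then this value is independent of the choice of N and M, and the resulting ℂ-bilinear pairing D × D' → ℂ is non-degenerate: for every nonzero c ∈ D there exists φ ∈ D' with ⟨c, φ⟩ ≠ 0, and for every nonzero φ ∈ D' there exists c ∈ D with ⟨c, φ⟩ ≠ 0. -/
/-- Membership in `D`: sequences vanishing for small `n` and constant for large `n`. -/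
def IsDSeq (c : ℤ → ℂ) : Prop :=
  (∃ N : ℤ, ∀ n < N, c n = 0) ∧ ∃ M : ℤ, ∀ n ≥ M, c n = c M

/-- Membership in `D'` (residue cardinality `q`): a family `φ m n` (`φ^{(m)}_n`, with the
irrelevant entries `n > m` normalized to `0`) compatible with the transition maps
`T_m : S(m+1) → S(m)`. -/
def IsDistrib (q : ℤ) (φ : ℤ → ℤ → ℂ) : Prop :=
  (∀ m n : ℤ, m < n → φ m n = 0) ∧
  ∀ m : ℤ, φ m m = ((q : ℂ) - 1) * φ (m + 1) m + φ (m + 1) (m + 1) ∧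
    ∀ n < m, φ m n = (q : ℂ) * φ (m + 1) n

/-- The pairing `⟨c, φ⟩` computed with a choice of window `N < M`:
`Σ_{i=N}^{M−1} (q^{M−i} − q^{M−i−1})·c_i·φ^{(M)}_i + c_M·φ^{(M)}_M`. -/
noncomputable def pairAt (q : ℤ) (c : ℤ → ℂ) (φ : ℤ → ℤ → ℂ) (N M : ℤ) : ℂ :=
  (∑ i ∈ Finset.Ico N M, ((q : ℂ) ^ (M - i) - (q : ℂ) ^ (M - i - 1)) * c i * φ M i) +
    c M * φ M M

namespace Stmt4Aux

lemma sum_split (f : ℤ → ℂ) {a b c : ℤ} (h1 : a ≤ b) (h2 : b ≤ c) :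
    ∑ i ∈ Finset.Ico a c, f i = ∑ i ∈ Finset.Ico a b, f i + ∑ i ∈ Finset.Ico b c, f i := by
  rw [← Finset.sum_union (Finset.Ico_disjoint_Ico_consecutive a b c),
    Finset.Ico_union_Ico_eq_Ico h1 h2]

lemma Ico_succ_singleton (b : ℤ) : Finset.Ico b (b + 1) = {b} := by
  ext x; simp only [Finset.mem_Ico, Finset.mem_singleton]; omega

lemma sum_top (f : ℤ → ℂ) {a b : ℤ} (h : a ≤ b) :
    ∑ i ∈ Finset.Ico a (b + 1), f i = ∑ i ∈ Finset.Ico a b, f i + f b := by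
  rw [sum_split f h (by omega : b ≤ b + 1), Ico_succ_singleton, Finset.sum_singleton]

lemma lemA (q : ℤ) (c : ℤ → ℂ) (φ : ℤ → ℤ → ℂ) (N' N M : ℤ) (hN'N : N' ≤ N) (hNM : N ≤ M)
    (hc : ∀ n < N, c n = 0) : pairAt q c φ N M = pairAt q c φ N' M := by
  unfold pairAt
  rw [sum_split _ hN'N hNM]
  have h0 : ∑ i ∈ Finset.Ico N' N, ((q : ℂ) ^ (M - i) - (q : ℂ) ^ (M - i - 1)) * c i * φ M i
      = 0 := by
    apply Finset.sum_eq_zero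
    intro i hi
    rw [hc i (Finset.mem_Ico.mp hi).2]; ring
  rw [h0]; ring

lemma lemB (q : ℤ) (hq0 : (q : ℂ) ≠ 0) (c : ℤ → ℂ) (φ : ℤ → ℤ → ℂ) (N M : ℤ)
    (hφ : IsDistrib q φ) (hNM : N ≤ M) (hc : c (M + 1) = c M) :
    pairAt q c φ N (M + 1) = pairAt q c φ N M := by
  unfold pairAt
  rw [sum_top _ hNM]
  have hsum : ∀ i ∈ Finset.Ico N M,
      ((q : ℂ) ^ (M + 1 - i) - (q : ℂ) ^ (M + 1 - i - 1)) * c i * φ (M + 1) i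
        = ((q : ℂ) ^ (M - i) - (q : ℂ) ^ (M - i - 1)) * c i * φ M i := by
    intro i hi
    have hiM : i < M := (Finset.mem_Ico.mp hi).2
    rw [(hφ.2 M).2 i hiM]
    have e1 : (q : ℂ) ^ (M + 1 - i) = (q : ℂ) ^ (M - i) * q := by
      have h := zpow_add_one₀ (a := (q : ℂ)) hq0 (M - i)
      rwa [show M - i + 1 = M + 1 - i by ring] at h
    have e2 : (q : ℂ) ^ (M - i) = (q : ℂ) ^ (M - i - 1) * q := by
      have h := zpow_add_one₀ (a := (q : ℂ)) hq0 (M - i - 1)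
      rwa [show M - i - 1 + 1 = M - i by ring] at h
    rw [show M + 1 - i - 1 = M - i by ring, e1, e2]
    ring
  rw [Finset.sum_congr rfl hsum, show M + 1 - M - 1 = (0 : ℤ) by ring,
    show M + 1 - M = (1 : ℤ) by ring, zpow_one, zpow_zero, hc, (hφ.2 M).1]
  ring

lemma lemB' (q : ℤ) (hq0 : (q : ℂ) ≠ 0) (c : ℤ → ℂ) (φ : ℤ → ℤ → ℂ) (N M : ℤ)
    (hφ : IsDistrib q φ) (hNM : N ≤ M) (hc : ∀ n ≥ M, c n = c M) :
    ∀ M', M ≤ M' → pairAt q c φ N M' = pairAt q c φ N M :=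
  Int.le_induction rfl (fun M'' hMM'' ih => by
    rw [lemB q hq0 c φ N M'' hφ (le_trans hNM hMM'')
      (by rw [hc (M'' + 1) (by omega), hc M'' hMM''])]
    exact ih)

lemma key1 (q : ℤ) (hq0 : (q : ℂ) ≠ 0) (c : ℤ → ℂ) (φ : ℤ → ℤ → ℂ) (hφ : IsDistrib q φ)
    (N M N' M' : ℤ) (hNM : N < M) (hN'M' : N' < M')
    (h1 : ∀ n < N, c n = 0) (h2 : ∀ n ≥ M, c n = c M)
    (h3 : ∀ n < N', c n = 0) (h4 : ∀ n ≥ M', c n = c M') :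
    pairAt q c φ N M = pairAt q c φ N' M' := by
  have t1 := lemA q c φ (min N N') N M (min_le_left _ _) hNM.le h1
  have t2 := lemB' q hq0 c φ (min N N') M hφ (le_trans (min_le_left _ _) hNM.le) h2
    (max M M') (le_max_left _ _)
  have t3 := lemA q c φ (min N N') N' M' (min_le_right _ _) hN'M'.le h3
  have t4 := lemB' q hq0 c φ (min N N') M' hφ (le_trans (min_le_right _ _) hN'M'.le) h4
    (max M M') (le_max_right _ _)
  rw [t1, ← t2, t4, ← t3]

lemma pairAt_succ (q : ℤ) (c : ℤ → ℂ) (φ : ℤ → ℤ → ℂ) (a : ℤ) :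
    pairAt q c φ a (a + 1)
      = ((q : ℂ) - 1) * c a * φ (a + 1) a + c (a + 1) * φ (a + 1) (a + 1) := by
  unfold pairAt
  rw [Ico_succ_singleton, Finset.sum_singleton,
    show a + 1 - a - 1 = (0 : ℤ) by ring, show a + 1 - a = (1 : ℤ) by ring, zpow_one, zpow_zero]

/-- The "evaluation at level k" distribution. -/
noncomputable def phiK (q k : ℤ) : ℤ → ℤ → ℂ := fun m n =>
  if n = k ∧ n < m then (q : ℂ) ^ (k + 1 - m) else if n = m ∧ m ≤ k then (q : ℂ) - 1 else 0

lemma phiK_distrib (q k : ℤ) (hq0 : (q : ℂ) ≠ 0) : IsDistrib q (phiK q k) := by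
  constructor
  · intro m n hmn
    unfold phiK
    rw [if_neg (by omega), if_neg (by omega)]
  · intro m
    constructor
    · rcases lt_trichotomy m k with h | h | h
      · have e1 : phiK q k m m = (q : ℂ) - 1 := by
          unfold phiK; rw [if_neg (by omega), if_pos ⟨rfl, by omega⟩]
        have e2 : phiK q k (m + 1) m = 0 := by
          unfold phiK; rw [if_neg (by omega), if_neg (by omega)]
        have e3 : phiK q k (m + 1) (m + 1) = (q : ℂ) - 1 := by
          unfold phiK; rw [if_neg (by omega), if_pos ⟨rfl, by omega⟩]
        rw [e1, e2, e3]; ring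
      · have e1 : phiK q k m m = (q : ℂ) - 1 := by
          unfold phiK; rw [if_neg (by omega), if_pos ⟨rfl, by omega⟩]
        have e2 : phiK q k (m + 1) m = 1 := by
          unfold phiK
          rw [if_pos ⟨h, by omega⟩, show k + 1 - (m + 1) = (0 : ℤ) by omega, zpow_zero]
        have e3 : phiK q k (m + 1) (m + 1) = 0 := by
          unfold phiK; rw [if_neg (by omega), if_neg (by omega)]
        rw [e1, e2, e3]; ring
      · have e1 : phiK q k m m = 0 := by
          unfold phiK; rw [if_neg (by omega), if_neg (by omega)]
        have e2 : phiK q k (m + 1) m = 0 := by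
          unfold phiK; rw [if_neg (by omega), if_neg (by omega)]
        have e3 : phiK q k (m + 1) (m + 1) = 0 := by
          unfold phiK; rw [if_neg (by omega), if_neg (by omega)]
        rw [e1, e2, e3]; ring
    · intro n hnm
      by_cases hnk : n = k
      · have e1 : phiK q k m n = (q : ℂ) ^ (k + 1 - m) := by
          unfold phiK; rw [if_pos ⟨hnk, hnm⟩]
        have e2 : phiK q k (m + 1) n = (q : ℂ) ^ (k + 1 - (m + 1)) := by
          unfold phiK; rw [if_pos ⟨hnk, by omega⟩]
        rw [e1, e2, show k + 1 - m = (k + 1 - (m + 1)) + 1 by ring, zpow_add_one₀ hq0]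
        ring
      · have e1 : phiK q k m n = 0 := by
          unfold phiK; rw [if_neg (by omega), if_neg (by omega)]
        have e2 : phiK q k (m + 1) n = 0 := by
          unfold phiK; rw [if_neg (by omega), if_neg (by omega)]
        rw [e1, e2]; ring

lemma phiK_eval (q k : ℤ) (hq0 : (q : ℂ) ≠ 0) (c : ℤ → ℂ) (N M : ℤ)
    (hNk : N ≤ k) (hkM : k < M) :
    pairAt q c (phiK q k) N M = ((q : ℂ) - 1) * c k := by
  unfold pairAt
  have hmem : k ∈ Finset.Ico N M := Finset.mem_Ico.mpr ⟨hNk, hkM⟩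
  rw [Finset.sum_eq_single_of_mem k hmem (fun i hi hik => by
    have hiM : i < M := (Finset.mem_Ico.mp hi).2
    have h0 : phiK q k M i = 0 := by
      unfold phiK; rw [if_neg (by omega), if_neg (by omega)]
    rw [h0]; ring)]
  have hd : phiK q k M M = 0 := by
    unfold phiK; rw [if_neg (by omega), if_neg (by omega)]
  have hφ : phiK q k M k = (q : ℂ) ^ (k + 1 - M) := by
    unfold phiK; rw [if_pos ⟨rfl, hkM⟩]
  rw [hd, hφ]
  have h1 : (q : ℂ) ^ (M - k) * (q : ℂ) ^ (k + 1 - M) = q := by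
    rw [← zpow_add₀ hq0, show M - k + (k + 1 - M) = (1 : ℤ) by ring, zpow_one]
  have h2 : (q : ℂ) ^ (M - k - 1) * (q : ℂ) ^ (k + 1 - M) = 1 := by
    rw [← zpow_add₀ hq0, show M - k - 1 + (k + 1 - M) = (0 : ℤ) by ring, zpow_zero]
  linear_combination c k * h1 - c k * h2

lemma hdown (q : ℤ) (hq0 : (q : ℂ) ≠ 0) (φ : ℤ → ℤ → ℂ) (hφ : IsDistrib q φ) (n : ℤ) :
    ∀ m, n + 1 ≤ m → φ (n + 1) n = (q : ℂ) ^ (m - n - 1) * φ m n :=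
  Int.le_induction
    (by rw [show n + 1 - n - 1 = (0 : ℤ) by ring, zpow_zero, one_mul])
    (fun m hm ih => by
      rw [ih, (hφ.2 m).2 n (by omega), show m + 1 - n - 1 = (m - n - 1) + 1 by ring,
        zpow_add_one₀ hq0]
      ring)

end Stmt4Aux

open Stmt4Aux in
/-- The pairing value is independent of the chosen window `N < M` (with `c_n = 0` for `n < N`
and `c_n = c_M` for `n ≥ M`), the resulting pairing `D × D' → ℂ` is ℂ-bilinear, and it is
non-degenerate in both arguments. -/
theorem statement4 (q : ℤ) (hq : 2 ≤ q) :
    (∀ (c : ℤ → ℂ) (φ : ℤ → ℤ → ℂ), IsDistrib q φ →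
      ∀ N M N' M' : ℤ, N < M → N' < M' →
        (∀ n < N, c n = 0) → (∀ n ≥ M, c n = c M) →
        (∀ n < N', c n = 0) → (∀ n ≥ M', c n = c M') →
        pairAt q c φ N M = pairAt q c φ N' M') ∧
    (∀ (c c' : ℤ → ℂ) (φ φ' : ℤ → ℤ → ℂ) (N M : ℤ) (s : ℂ),
      pairAt q (s • c + c') φ N M = s * pairAt q c φ N M + pairAt q c' φ N M ∧
      pairAt q c (s • φ + φ') N M = s * pairAt q c φ N M + pairAt q c φ' N M) ∧
    (∀ c : ℤ → ℂ, IsDSeq c → c ≠ 0 →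
      ∃ φ : ℤ → ℤ → ℂ, IsDistrib q φ ∧
        ∀ N M : ℤ, N < M → (∀ n < N, c n = 0) → (∀ n ≥ M, c n = c M) →
          pairAt q c φ N M ≠ 0) ∧
    (∀ φ : ℤ → ℤ → ℂ, IsDistrib q φ → (∃ m n : ℤ, n ≤ m ∧ φ m n ≠ 0) →
      ∃ c : ℤ → ℂ, IsDSeq c ∧
        ∀ N M : ℤ, N < M → (∀ n < N, c n = 0) → (∀ n ≥ M, c n = c M) →
          pairAt q c φ N M ≠ 0) := by
  have hq0 : (q : ℂ) ≠ 0 := Int.cast_ne_zero.mpr (by omega)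
  have hqm1 : (q : ℂ) - 1 ≠ 0 := sub_ne_zero.mpr (by
    exact_mod_cast (show q ≠ 1 by omega))
  refine ⟨fun c φ hφ N M N' M' h h' h1 h2 h3 h4 =>
      key1 q hq0 c φ hφ N M N' M' h h' h1 h2 h3 h4, ?_, ?_, ?_⟩
  · -- bilinearity
    intro c c' φ φ' N M s
    constructor
    · unfold pairAt
      simp only [Pi.add_apply, Pi.smul_apply, smul_eq_mul]
      rw [Finset.sum_congr rfl (fun i _ => show
          ((q : ℂ) ^ (M - i) - (q : ℂ) ^ (M - i - 1)) * (s * c i + c' i) * φ M i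
            = s * (((q : ℂ) ^ (M - i) - (q : ℂ) ^ (M - i - 1)) * c i * φ M i)
              + ((q : ℂ) ^ (M - i) - (q : ℂ) ^ (M - i - 1)) * c' i * φ M i by ring),
        Finset.sum_add_distrib, ← Finset.mul_sum]
      ring
    · unfold pairAt
      simp only [Pi.add_apply, Pi.smul_apply, smul_eq_mul]
      rw [Finset.sum_congr rfl (fun i _ => show
          ((q : ℂ) ^ (M - i) - (q : ℂ) ^ (M - i - 1)) * c i * (s * φ M i + φ' M i)
            = s * (((q : ℂ) ^ (M - i) - (q : ℂ) ^ (M - i - 1)) * c i * φ M i)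
              + ((q : ℂ) ^ (M - i) - (q : ℂ) ^ (M - i - 1)) * c i * φ' M i by ring),
        Finset.sum_add_distrib, ← Finset.mul_sum]
      ring
  · -- nondegeneracy in c
    intro c hc hc0
    obtain ⟨k, hk⟩ : ∃ k, c k ≠ 0 := by
      by_contra h
      push_neg at h
      exact hc0 (funext h)
    refine ⟨phiK q k, phiK_distrib q k hq0, ?_⟩
    intro N M hNM h1 h2
    have hwin : pairAt q c (phiK q k) N M
        = pairAt q c (phiK q k) (min N k) (max M (k + 1)) := by
      apply key1 q hq0 c _ (phiK_distrib q k hq0) N M _ _ hNM (by omega) h1 h2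
      · intro n hn
        exact h1 n (by omega)
      · intro n hn
        rw [h2 n (by omega), h2 (max M (k + 1)) (le_max_left _ _)]
    rw [hwin, phiK_eval q k hq0 c _ _ (min_le_right _ _) (by omega)]
    exact mul_ne_zero hqm1 hk
  · -- nondegeneracy in φ
    rintro φ hφ ⟨m, n, hnm, hmn0⟩
    rcases eq_or_lt_of_le hnm with heq | hlt
    · -- n = m : use the step function at m
      subst heq
      refine ⟨fun i => if n ≤ i then 1 else 0, ⟨⟨n, fun i hi => if_neg (by omega)⟩,
        ⟨n, fun i hi => by
          show (if n ≤ i then (1 : ℂ) else 0) = (if n ≤ n then (1 : ℂ) else 0)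
          rw [if_pos (show n ≤ i from hi), if_pos (le_refl n)]⟩⟩, ?_⟩
      intro N M hNM h1 h2
      have hwin : pairAt q (fun i => if n ≤ i then 1 else 0) φ N M
          = pairAt q (fun i => if n ≤ i then 1 else 0) φ n (n + 1) := by
        apply key1 q hq0 _ φ hφ N M n (n + 1) hNM (by omega) h1 h2
        · intro i hi
          exact if_neg (by omega)
        · intro i hi
          show (if n ≤ i then (1 : ℂ) else 0) = (if n ≤ n + 1 then (1 : ℂ) else 0)
          rw [if_pos (by omega : n ≤ i), if_pos (by omega : n ≤ n + 1)]
      rw [hwin, pairAt_succ]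
      simp only [if_pos (le_refl n), if_pos (by omega : n ≤ n + 1)]
      have hval : ((q : ℂ) - 1) * 1 * φ (n + 1) n + 1 * φ (n + 1) (n + 1) = φ n n := by
        rw [(hφ.2 n).1]; ring
      rw [hval]
      exact hmn0
    · -- n < m : use the delta function at n
      refine ⟨fun i => if i = n then 1 else 0, ⟨⟨n, fun i hi => if_neg (by omega)⟩,
        ⟨n + 1, fun i hi => by
          show (if i = n then (1 : ℂ) else 0) = (if n + 1 = n then (1 : ℂ) else 0)
          rw [if_neg (by omega), if_neg (by omega)]⟩⟩, ?_⟩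
      intro N M hNM h1 h2
      have hwin : pairAt q (fun i => if i = n then 1 else 0) φ N M
          = pairAt q (fun i => if i = n then 1 else 0) φ n (n + 1) := by
        apply key1 q hq0 _ φ hφ N M n (n + 1) hNM (by omega) h1 h2
        · intro i hi
          exact if_neg (by omega)
        · intro i hi
          show (if i = n then (1 : ℂ) else 0) = (if n + 1 = n then (1 : ℂ) else 0)
          rw [if_neg (by omega), if_neg (by omega)]
      rw [hwin, pairAt_succ]
      simp only [if_pos rfl, if_neg (by omega : ¬(n + 1 = n)), eq_self_iff_true, if_true]
      have hval : ((q : ℂ) - 1) * 1 * φ (n + 1) n + 0 * φ (n + 1) (n + 1)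
          = ((q : ℂ) - 1) * ((q : ℂ) ^ (m - n - 1) * φ m n) := by
        rw [hdown q hq0 φ hφ n m hlt]; ring
      rw [hval]
      exact mul_ne_zero hqm1 (mul_ne_zero (zpow_ne_zero _ hq0) hmn0)
end

section
/- For every α ∈ ℂ with α ≠ 0, the eigenspace Φ_α = { φ ∈ D' : Uφ = α·φ } of the shift operator U on D' is a one-dimensional ℂ-vector space. -/
/-- The coefficient sequence of the generator of the eigenspace. -/
noncomputable def cSeq (q : ℤ) (α : ℂ) : ℤ → ℂ := fun k =>
  if k < 0 then 0 else if k = 0 then ((q:ℂ) - 1) * α else (α - 1) * (q:ℂ)^(1-k)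

/-- The generator of the eigenspace. -/
noncomputable def genDist (q : ℤ) (α : ℂ) : ℤ → ℤ → ℂ :=
  fun m n => α^(-n) * cSeq q α (m - n)



/-- The space `D'` (residue cardinality `q`): families `φ m n` (`φ^{(m)}_n`, with the
irrelevant entries `n > m` normalized to `0`) compatible with the transition maps
`T_m : S(m+1) → S(m)`, as a ℂ-subspace of `ℤ → ℤ → ℂ`. -/
noncomputable def DistSpace (q : ℤ) : Submodule ℂ (ℤ → ℤ → ℂ) where
  carrier := {φ | (∀ m n : ℤ, m < n → φ m n = 0) ∧
    ∀ m : ℤ, φ m m = ((q : ℂ) - 1) * φ (m + 1) m + φ (m + 1) (m + 1) ∧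
      ∀ n < m, φ m n = (q : ℂ) * φ (m + 1) n}
  add_mem' := by
    rintro a b ⟨ha0, ha⟩ ⟨hb0, hb⟩
    refine ⟨fun m n h => by simp [Pi.add_apply, ha0 m n h, hb0 m n h],
      fun m => ⟨?_, fun n h => ?_⟩⟩
    · have h1 := (ha m).1
      have h2 := (hb m).1
      simp only [Pi.add_apply]
      rw [h1, h2]; ring
    · have h1 := (ha m).2 n h
      have h2 := (hb m).2 n h
      simp only [Pi.add_apply]
      rw [h1, h2]; ring
  zero_mem' := ⟨fun _ _ _ => rfl, fun m => ⟨by simp, fun n h => by simp⟩⟩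
  smul_mem' := by
    rintro s a ⟨ha0, ha⟩
    refine ⟨fun m n h => by simp [Pi.smul_apply, ha0 m n h],
      fun m => ⟨?_, fun n h => ?_⟩⟩
    · have h1 := (ha m).1
      simp only [Pi.smul_apply, smul_eq_mul]
      rw [h1]; ring
    · have h1 := (ha m).2 n h
      simp only [Pi.smul_apply, smul_eq_mul]
      rw [h1]; ring

/-- The shift operator `U` on distributions: `(Uφ)^{(m)}_n = φ^{(m−1)}_{n−1}`. -/
def shiftDist : (ℤ → ℤ → ℂ) →ₗ[ℂ] (ℤ → ℤ → ℂ) where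
  toFun φ := fun m n => φ (m - 1) (n - 1)
  map_add' := fun _ _ => rfl
  map_smul' := fun _ _ => rfl

/-- For every `α ≠ 0`, the eigenspace `Φ_α = {φ ∈ D' : Uφ = α·φ}` of the shift operator on
`D'` is one-dimensional over ℂ. -/
theorem statement5 (q : ℤ) (hq : 2 ≤ q) (α : ℂ) (hα : α ≠ 0) :
    Module.finrank ℂ
      ↥(DistSpace q ⊓ LinearMap.ker (shiftDist - α • LinearMap.id)) = 1 := by
  classical
  have hq0 : (q:ℂ) ≠ 0 := Int.cast_ne_zero.mpr (by omega)
  have hq1 : (q:ℂ) - 1 ≠ 0 := by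
    have : ((q - 1 : ℤ) : ℂ) ≠ 0 := Int.cast_ne_zero.mpr (by omega)
    simpa using this
  have c_neg : ∀ k < 0, cSeq q α k = 0 := fun k hk => by simp [cSeq, hk]
  have c_zero : cSeq q α 0 = ((q:ℂ) - 1) * α := by simp [cSeq]
  have c_pos : ∀ k, 1 ≤ k → cSeq q α k = (α - 1) * (q:ℂ)^(1-k) := by
    intro k hk
    simp [cSeq, show ¬ k < 0 by omega, show k ≠ 0 by omega]
  have c_one : cSeq q α 1 = α - 1 := by rw [c_pos 1 le_rfl]; simp
  have c_rec : ∀ k, 1 ≤ k → cSeq q α k = (q:ℂ) * cSeq q α (k+1) := by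
    intro k hk
    rw [c_pos k hk, c_pos (k+1) (by omega), show 1-(k+1) = -k by ring,
      show 1-k = 1 + -k by ring, zpow_add₀ hq0]
    simp only [zpow_one]; ring
  set ψ : ℤ → ℤ → ℂ := genDist q α with hψdef
  have hψ : ∀ m n, ψ m n = α^(-n) * cSeq q α (m - n) := fun m n => rfl
  have hψD : ψ ∈ DistSpace q := by
    refine ⟨fun m n h => by rw [hψ, c_neg _ (by omega), mul_zero], fun m => ⟨?_, ?_⟩⟩
    · rw [hψ, hψ, hψ]
      rw [show m - m = 0 from by ring, show m + 1 - m = 1 from by ring,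
        show m + 1 - (m + 1) = 0 from by ring, c_zero, c_one,
        show -(m+1) = -m + -1 from by ring, zpow_add₀ hα, zpow_neg_one]
      have key : ((q:ℂ)-1)*α = ((q:ℂ)-1)*(α-1) + α⁻¹*(((q:ℂ)-1)*α) := by
        field_simp
        ring
      linear_combination α^(-m) * key
    · intro n hn
      rw [hψ, hψ, c_rec (m - n) (by omega), show m + 1 - n = m - n + 1 from by ring]
      ring
  have hψK : ψ ∈ LinearMap.ker (shiftDist - α • LinearMap.id) := by
    rw [LinearMap.mem_ker]
    funext m n
    show ψ (m-1) (n-1) - α * ψ m n = 0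
    rw [hψ, hψ, show m - 1 - (n - 1) = m - n from by ring,
      show -(n-1) = -n + 1 from by ring, zpow_add₀ hα]
    simp only [zpow_one]; ring
  have hψne : ψ ≠ 0 := by
    intro h
    have h00 : ψ 0 0 = 0 := by rw [h]; rfl
    rw [hψ] at h00
    simp only [neg_zero, zpow_zero, sub_zero, one_mul, c_zero] at h00
    exact (mul_ne_zero hq1 hα) h00
  refine finrank_eq_one (⟨ψ, hψD, hψK⟩ :
      ↥(DistSpace q ⊓ LinearMap.ker (shiftDist - α • LinearMap.id))) ?_ ?_
  · intro h
    exact hψne (congrArg Subtype.val h)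
  · rintro ⟨φ, hφD, hφK⟩
    obtain ⟨h0, hrec⟩ := hφD
    have hE : ∀ m n : ℤ, φ (m-1) (n-1) = α * φ m n := by
      intro m n
      have hker := LinearMap.mem_ker.mp
        (hφK : φ ∈ LinearMap.ker (shiftDist - α • LinearMap.id))
      have h2 : φ (m-1) (n-1) - α * φ m n = 0 := congrFun (congrFun hker m) n
      exact sub_eq_zero.mp h2
    have hA : ∀ n : ℤ, ∀ d : ℤ, φ (d + n) n = α^(-n) * φ d 0 := by
      intro n
      induction n using Int.induction_on with
      | zero => intro d; simp
      | succ i ih =>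
        intro d
        have h1 := hE (d + ((i:ℤ)+1)) ((i:ℤ)+1)
        rw [show d + ((i:ℤ)+1) - 1 = d + (i:ℤ) from by ring,
          show (i:ℤ)+1-1 = (i:ℤ) from by ring, ih d] at h1
        have hX : φ (d + ((i:ℤ)+1)) ((i:ℤ)+1) = α⁻¹ * (α^(-(i:ℤ)) * φ d 0) := by
          apply mul_left_cancel₀ hα
          rw [← h1]
          field_simp
        rw [hX, show -((i:ℤ)+1) = -(i:ℤ) + -1 from by ring, zpow_add₀ hα, zpow_neg_one]
        ring
      | pred i ih =>
        intro d
        have h1 := hE (d + -(i:ℤ)) (-(i:ℤ))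
        rw [ih d] at h1
        rw [show d + (-(i:ℤ)-1) = d + -(i:ℤ) - 1 from by ring, h1,
          show -(-(i:ℤ)-1) = -(-(i:ℤ)) + 1 from by ring, zpow_add₀ hα]
        simp only [zpow_one]; ring
    have hC : ∀ j : ℕ, φ (1 + (j:ℤ)) 0 = ((q:ℂ))^(-(j:ℤ)) * φ 1 0 := by
      intro j
      induction j with
      | zero => simp
      | succ i ih =>
        have h1 := (hrec (1 + (i:ℤ))).2 0 (by omega)
        have h2 : φ (1 + ((i:ℤ)+1)) 0 = (q:ℂ)⁻¹ * φ (1+(i:ℤ)) 0 := by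
          rw [show (1:ℤ) + ((i:ℤ)+1) = (1 + (i:ℤ)) + 1 from by ring]
          apply mul_left_cancel₀ hq0
          rw [← h1]
          field_simp
        push_cast
        rw [h2, ih, show -((i:ℤ)+1) = -(i:ℤ) + -1 from by ring, zpow_add₀ hq0, zpow_neg_one]
        ring
    have h11 : φ 1 1 = α⁻¹ * φ 0 0 := by
      have h := hA 1 0
      rw [zero_add, zpow_neg_one] at h
      exact h
    have hdiag := (hrec 0).1
    simp only [zero_add] at hdiag
    rw [h11] at hdiag
    have hD : ((q:ℂ) - 1) * φ 1 0 * α = φ 0 0 * (α - 1) := by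
      have h3 : φ 0 0 * α = (((q:ℂ) - 1) * φ 1 0 + α⁻¹ * φ 0 0) * α := by rw [← hdiag]
      have h4 : α⁻¹ * φ 0 0 * α = φ 0 0 := by field_simp
      linear_combination -h3 - h4
    refine ⟨φ 0 0 / (((q:ℂ) - 1) * α), Subtype.ext ?_⟩
    show (φ 0 0 / (((q:ℂ)-1)*α)) • ψ = φ
    funext m n
    simp only [Pi.smul_apply, smul_eq_mul]
    have hmn : φ m n = α^(-n) * φ (m - n) 0 := by
      have h := hA n (m - n)
      rw [show m - n + n = m from by ring] at h
      exact h
    have key : ∀ k : ℤ, (φ 0 0 / (((q:ℂ)-1)*α)) * cSeq q α k = φ k 0 := by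
      intro k
      rcases lt_trichotomy k 0 with hk | hk | hk
      · rw [c_neg k hk, h0 k 0 hk, mul_zero]
      · subst hk; rw [c_zero]; field_simp
      · obtain ⟨j, hj⟩ := Int.le.dest (show (1:ℤ) ≤ k by omega)
        rw [← hj, c_pos _ (by omega), hC j, show 1 - (1 + (j:ℤ)) = -(j:ℤ) from by ring]
        have hq1α : ((q:ℂ) - 1) * α ≠ 0 := mul_ne_zero hq1 hα
        rw [div_mul_eq_mul_div, div_eq_iff hq1α]
        linear_combination (-(q:ℂ)^(-(j:ℤ))) * hD
    rw [hψ, hmn, ← key (m - n)]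
    ring
end

section
/- For every α ∈ ℂ with α ≠ 0, the family g_α is compatible with the transition maps (so g_α ∈ D'), g_α ≠ 0, and U g_α = α·g_α; moreover g_α is normalized so that its pairing with the indicator sequence c (c_n = 1 for n ≥ 0, c_n = 0 for n < 0, the characteristic function of O_L) equals 1. -/
/-- The element `g_α`: `(g_α)^{(m)}_m = α^{−m}`,
`(g_α)^{(m)}_{m−k} = α^{−m+k−1}(α−1)/(q^{k−1}(q−1))` for `k > 0` (so at `n = m − k < m` the
value is `α^{−n−1}(α−1)/(q^{m−n−1}(q−1))`). -/
noncomputable def gAlpha (q : ℤ) (α : ℂ) : ℤ → ℤ → ℂ := fun m n =>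
  if n = m then α ^ (-m)
  else if n < m then α ^ (-n - 1) * (α - 1) / ((q : ℂ) ^ (m - n - 1) * ((q : ℂ) - 1))
  else 0

/-- The characteristic function of `O_L`: `c_n = 1` for `n ≥ 0`, `c_n = 0` for `n < 0`. -/
noncomputable def indO : ℤ → ℂ := fun n => if 0 ≤ n then 1 else 0

lemma gAlpha_self (q : ℤ) (α : ℂ) (m : ℤ) : gAlpha q α m m = α ^ (-m) := by
  simp [gAlpha]

lemma gAlpha_lt (q : ℤ) (α : ℂ) {m n : ℤ} (h : n < m) :
    gAlpha q α m n = α ^ (-n - 1) * (α - 1) / ((q : ℂ) ^ (m - n - 1) * ((q : ℂ) - 1)) := by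
  simp [gAlpha, h.ne, h]

lemma gAlpha_gt (q : ℤ) (α : ℂ) {m n : ℤ} (h : m < n) : gAlpha q α m n = 0 := by
  unfold gAlpha
  rw [if_neg (by omega), if_neg (by omega)]

lemma telescope (α : ℂ) (M : ℤ) (hM : 0 ≤ M) :
    (∑ i ∈ Finset.Ico (0:ℤ) M, (α ^ (-i) - α ^ (-i - 1))) = 1 - α ^ (-M) := by
  lift M to ℕ using hM
  induction M with
  | zero => simp
  | succ k ih =>
    have hins : Finset.Ico (0:ℤ) ((k:ℤ) + 1) = insert (k:ℤ) (Finset.Ico (0:ℤ) (k:ℤ)) := by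
      ext x; simp only [Finset.mem_Ico, Finset.mem_insert]; omega
    rw [show ((k+1 : ℕ) : ℤ) = (k:ℤ) + 1 by push_cast; ring] at *
    rw [hins, Finset.sum_insert (by simp), ih, show -((k:ℤ) + 1) = -(k:ℤ) - 1 by ring]
    ring

/-- For every `α ≠ 0`: `g_α` is compatible with the transition maps (so `g_α ∈ D'`),
`g_α ≠ 0`, `U g_α = α·g_α` (i.e. `(g_α)^{(m−1)}_{n−1} = α·(g_α)^{(m)}_n`), and the pairing
of `g_α` with the characteristic function of `O_L` equals `1`. -/
theorem statement6 (q : ℤ) (hq : 2 ≤ q) (α : ℂ) (hα : α ≠ 0) :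
    IsDistrib q (gAlpha q α) ∧
    gAlpha q α ≠ 0 ∧
    (∀ m n : ℤ, gAlpha q α (m - 1) (n - 1) = α * gAlpha q α m n) ∧
    (∀ N M : ℤ, N < M → (∀ n < N, indO n = 0) → (∀ n ≥ M, indO n = indO M) →
      pairAt q indO (gAlpha q α) N M = 1) := by
  have hqC : (q : ℂ) ≠ 0 := by
    exact_mod_cast (show (q:ℤ) ≠ 0 by omega)
  have hq1 : (q : ℂ) - 1 ≠ 0 := by
    intro h
    have : (q : ℂ) = 1 := by linear_combination h
    have : q = 1 := by exact_mod_cast this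
    omega
  refine ⟨⟨?_, ?_⟩, ?_, ?_, ?_⟩
  · intro m n h
    exact gAlpha_gt q α h
  · intro m
    constructor
    · rw [gAlpha_self, gAlpha_self, gAlpha_lt q α (by omega : m < m + 1)]
      rw [show m + 1 - m - 1 = 0 by ring, zpow_zero,
        show -m = (-m - 1) + 1 by ring, zpow_add₀ hα, zpow_one,
        show -(m + 1) = -m - 1 by ring]
      field_simp
      ring
    · intro n hn
      rw [gAlpha_lt q α hn, gAlpha_lt q α (by omega : n < m + 1),
        show m + 1 - n - 1 = (m - n - 1) + 1 by ring, zpow_add₀ hqC, zpow_one]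
      obtain ⟨Q, hQ, hQ0⟩ : ∃ Q : ℂ, (q : ℂ) ^ (m - n - 1) = Q ∧ Q ≠ 0 :=
        ⟨_, rfl, zpow_ne_zero _ hqC⟩
      rw [hQ]
      field_simp
  · intro h
    have := congrFun (congrFun h 0) 0
    simp [gAlpha_self] at this
  · intro m n
    rcases lt_trichotomy n m with h | rfl | h
    · rw [gAlpha_lt q α h, gAlpha_lt q α (by omega : n - 1 < m - 1),
        show -(n - 1) - 1 = (-n - 1) + 1 by ring, zpow_add₀ hα, zpow_one,
        show m - 1 - (n - 1) - 1 = m - n - 1 by ring]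
      ring
    · rw [gAlpha_self, gAlpha_self, show -(n - 1) = -n + 1 by ring, zpow_add₀ hα, zpow_one]
      ring
    · rw [gAlpha_gt q α h, gAlpha_gt q α (by omega : m - 1 < n - 1)]
      ring
  · intro N M hNM h0 h1
    have hM : 0 ≤ M := by
      by_contra h
      have h2 := h1 0 (by omega)
      simp only [indO] at h2
      rw [if_pos le_rfl, if_neg h] at h2
      exact one_ne_zero h2
    have hN : N ≤ 0 := by
      by_contra h
      have h2 := h0 (N - 1) (by omega)
      simp only [indO] at h2
      rw [if_pos (by omega)] at h2
      exact one_ne_zero h2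
    have hiM : indO M = 1 := by simp [indO, hM]
    unfold pairAt
    rw [hiM, gAlpha_self]
    have hsub : Finset.Ico (0:ℤ) M ⊆ Finset.Ico N M := Finset.Ico_subset_Ico hN le_rfl
    have hzero : ∀ i ∈ Finset.Ico N M, i ∉ Finset.Ico (0:ℤ) M →
        ((q : ℂ) ^ (M - i) - (q : ℂ) ^ (M - i - 1)) * indO i * gAlpha q α M i = 0 := by
      intro i hi hi'
      simp only [Finset.mem_Ico] at hi hi'
      have hi0 : indO i = 0 := by
        simp only [indO]; rw [if_neg (by omega)]
      rw [hi0]; ring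
    rw [← Finset.sum_subset hsub hzero]
    have hterm : ∀ i ∈ Finset.Ico (0:ℤ) M,
        ((q : ℂ) ^ (M - i) - (q : ℂ) ^ (M - i - 1)) * indO i * gAlpha q α M i
          = α ^ (-i) - α ^ (-i - 1) := by
      intro i hi
      simp only [Finset.mem_Ico] at hi
      rw [gAlpha_lt q α (show i < M by omega)]
      have hii : indO i = 1 := by simp [indO, hi.1]
      rw [hii, show (q:ℂ) ^ (M - i) = (q:ℂ) ^ (M - i - 1) * q by
          rw [← zpow_add_one₀ hqC, show M - i - 1 + 1 = M - i by ring],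
        show α ^ (-i) = α ^ (-i - 1) * α by
          rw [← zpow_add_one₀ hα, show -i - 1 + 1 = -i by ring]]
      obtain ⟨Q, hQ, hQ0⟩ : ∃ Q : ℂ, (q : ℂ) ^ (M - i - 1) = Q ∧ Q ≠ 0 :=
        ⟨_, rfl, zpow_ne_zero _ hqC⟩
      rw [hQ]
      field_simp
    rw [Finset.sum_congr rfl hterm, telescope α M hM]
    ring
end

section
/- The representation π of the discrete Heisenberg group G on V defined by π(a,b,c)(δ_m) = q^{−c−a·m}·δ_{m+b} (the induced representation ind_{H⊕C}^G(χ₀) for the character χ₀(a⊕c) = q^{−c}) is irreducible: every ℂ-subspace of V stable under π(g) for all g ∈ G is either 0 or all of V. -/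
/-- Multiplication of the discrete Heisenberg group `Heis(3,ℤ)` on `ℤ³`:
`(a₁,b₁,c₁)·(a₂,b₂,c₂) = (a₁+a₂, b₁+b₂, c₁+c₂+a₁·b₂)`. -/
def hmul (x y : ℤ × ℤ × ℤ) : ℤ × ℤ × ℤ :=
  (x.1 + y.1, x.2.1 + y.2.1, x.2.2 + y.2.2 + x.1 * y.2.1)

/-- The operator `π(a,b,c)` on the space `V = ℤ →₀ ℂ` of finitely supported functions,
defined on the standard basis by `π(a,b,c)(δ_m) = q^{−c−a·m}·δ_{m+b}` (the induced
representation `ind_{H⊕C}^G(χ₀)` with `χ₀(a⊕c) = q^{−c}`). -/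
noncomputable def piRep (q : ℤ) (g : ℤ × ℤ × ℤ) : (ℤ →₀ ℂ) →ₗ[ℂ] (ℤ →₀ ℂ) :=
  Finsupp.lift (ℤ →₀ ℂ) ℂ ℤ fun m =>
    ((q : ℂ) ^ (-g.2.2 - g.1 * m)) • Finsupp.single (m + g.2.1) (1 : ℂ)

lemma piRep_single (q : ℤ) (g : ℤ × ℤ × ℤ) (m : ℤ) :
    piRep q g (Finsupp.single m 1) =
      ((q : ℂ) ^ (-g.2.2 - g.1 * m)) • Finsupp.single (m + g.2.1) (1 : ℂ) := by
  simp only [piRep, Finsupp.lift_apply]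
  rw [Finsupp.sum_single_index (by simp)]
  rw [one_smul]

lemma piRep_diag (q : ℤ) (v : ℤ →₀ ℂ) (n : ℤ) :
    (piRep q (1,0,0) v) n = (q : ℂ) ^ (-n) * v n := by
  simp only [piRep, Finsupp.lift_apply]
  rw [Finsupp.sum_apply, Finsupp.sum]
  simp only [Finsupp.smul_apply, Finsupp.single_apply, smul_eq_mul]
  rw [Finset.sum_eq_single n]
  · simp [mul_comm]
  · intro b _ hb; simp [hb]
  · intro h
    simp [Finsupp.notMem_support_iff.mp h]

-- zpow injectivity on ℂ for q ≥ 2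
lemma qpow_inj (q : ℤ) (hq : 2 ≤ q) {a b : ℤ} (h : (q:ℂ) ^ a = (q:ℂ) ^ b) : a = b := by
  have h1 : (1:ℝ) < (q:ℝ) := by exact_mod_cast lt_of_lt_of_le one_lt_two hq
  have : ((q:ℝ) ^ a : ℝ) = (q:ℝ) ^ b := by
    have := h
    rw [show ((q:ℂ)) = ((q:ℝ) : ℂ) by push_cast; ring] at this
    rw [← Complex.ofReal_zpow, ← Complex.ofReal_zpow] at this
    exact_mod_cast this
  exact zpow_right_injective₀ (by linarith) (ne_of_gt h1) this

lemma exists_single_mem (q : ℤ) (hq : 2 ≤ q) (W : Submodule ℂ (ℤ →₀ ℂ))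
    (hW : ∀ g : ℤ × ℤ × ℤ, ∀ v ∈ W, piRep q g v ∈ W) :
    ∀ n : ℕ, ∀ v ∈ W, v ≠ 0 → v.support.card ≤ n →
      ∃ m : ℤ, Finsupp.single m (1:ℂ) ∈ W := by
  intro n
  induction n with
  | zero =>
    intro v _ hv hc
    exact absurd (Finsupp.support_eq_empty.mp (Finset.card_eq_zero.mp (Nat.le_zero.mp hc))) hv
  | succ n ih =>
    intro v hvW hv hc
    by_cases h1 : v.support.card ≤ 1
    · -- support is a singleton
      have hne : v.support.Nonempty := Finsupp.support_nonempty_iff.mpr hv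
      have hcard : v.support.card = 1 := le_antisymm h1 (Finset.card_pos.mpr hne)
      obtain ⟨m, hm⟩ := Finset.card_eq_one.mp hcard
      obtain ⟨hvm, hveq⟩ := Finsupp.support_eq_singleton.mp hm
      set c := v m with hc'
      refine ⟨m, ?_⟩
      have h2 : c⁻¹ • v = Finsupp.single m (1:ℂ) := by
        rw [hveq, Finsupp.smul_single, smul_eq_mul, inv_mul_cancel₀ hvm]
      rw [← h2]
      exact W.smul_mem _ hvW
    · -- support has at least 2 elements
      push_neg at h1
      obtain ⟨m₀, hm₀, m₁, hm₁, hne⟩ := Finset.one_lt_card.mp h1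
      set w : ℤ →₀ ℂ := piRep q (1,0,0) v - ((q:ℂ) ^ (-m₁)) • v with hwdef
      have hwW : w ∈ W := W.sub_mem (hW _ _ hvW) (W.smul_mem _ hvW)
      have hwapp : ∀ k : ℤ, w k = ((q:ℂ) ^ (-k) - (q:ℂ) ^ (-m₁)) * v k := by
        intro k
        rw [hwdef]
        simp only [Finsupp.sub_apply, Finsupp.smul_apply, smul_eq_mul, piRep_diag]
        ring
      have hwm0 : w m₀ ≠ 0 := by
        rw [hwapp]
        refine mul_ne_zero ?_ (Finsupp.mem_support_iff.mp hm₀)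
        intro h
        rw [sub_eq_zero] at h
        exact hne (neg_injective (qpow_inj q hq h))
      have hwne : w ≠ 0 := fun h => hwm0 (by rw [h]; rfl)
      have hsub : w.support ⊆ v.support.erase m₁ := by
        intro k hk
        have hk' := Finsupp.mem_support_iff.mp hk
        rw [hwapp] at hk'
        have hvk : v k ≠ 0 := fun h => hk' (by rw [h, mul_zero])
        refine Finset.mem_erase.mpr ⟨?_, Finsupp.mem_support_iff.mpr hvk⟩
        intro h
        subst h
        simp at hk'
      have hcard' : w.support.card ≤ n := by
        calc w.support.card ≤ (v.support.erase m₁).card := Finset.card_le_card hsub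
        _ = v.support.card - 1 := Finset.card_erase_of_mem hm₁
        _ ≤ n := by omega
      exact ih w hwW hwne hcard'

/-- The representation `π` of the discrete Heisenberg group on `V` is irreducible: every
ℂ-subspace of `V` stable under all `π(g)` is `0` or `V`. -/
theorem statement9 (q : ℤ) (hq : 2 ≤ q) :
    ∀ W : Submodule ℂ (ℤ →₀ ℂ),
      (∀ g : ℤ × ℤ × ℤ, ∀ v ∈ W, piRep q g v ∈ W) → W = ⊥ ∨ W = ⊤ := by
  intro W hW
  by_cases hbot : W = ⊥
  · exact Or.inl hbot
  right
  obtain ⟨v, hvW, hv⟩ := Submodule.exists_mem_ne_zero_of_ne_bot hbot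
  obtain ⟨m, hm⟩ := exists_single_mem q hq W hW v.support.card v hvW hv le_rfl
  have hall : ∀ k : ℤ, Finsupp.single k (1:ℂ) ∈ W := by
    intro k
    have := hW (0, k - m, 0) _ hm
    rw [piRep_single] at this
    simpa using this
  rw [Submodule.eq_top_iff']
  intro u
  rw [← Finsupp.sum_single u]
  refine Submodule.sum_mem W fun k _ => ?_
  have h3 : Finsupp.single k (u k) = (u k) • Finsupp.single k (1:ℂ) := by
    rw [Finsupp.smul_single, smul_eq_mul, mul_one]
  rw [h3]
  exact W.smul_mem _ (hall k)
end

section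
/- For nonzero α₁, α₂ ∈ ℂ, the representations ρ_{α₁} and ρ_{α₂} of the discrete Heisenberg group G are isomorphic (i.e. there exists a ℂ-linear bijection Θ : V → V with Θ ∘ ρ_{α₁}(g) = ρ_{α₂}(g) ∘ Θ for all g ∈ G) if and only if there exists an integer l with α₁ = q^l·α₂. Consequently the isomorphism classes of the representations ρ_α are parametrized by the elliptic curve ℂ*/q^ℤ. -/
/-- The operator `ρ_α(a,b,c)` on the space `V = ℤ →₀ ℂ` of finitely supported functions,
defined on the standard basis by `ρ_α(a,b,c)(Δ_m) = q^{−c−a(m+1)}·α^a·Δ_{m+b}`. -/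
noncomputable def heisRep (q : ℤ) (α : ℂ) (g : ℤ × ℤ × ℤ) : (ℤ →₀ ℂ) →ₗ[ℂ] (ℤ →₀ ℂ) :=
  Finsupp.lift (ℤ →₀ ℂ) ℂ ℤ fun m =>
    ((q : ℂ) ^ (-g.2.2 - g.1 * (m + 1)) * α ^ g.1) • Finsupp.single (m + g.2.1) (1 : ℂ)

lemma heisRep_single (q : ℤ) (α : ℂ) (g : ℤ × ℤ × ℤ) (m : ℤ) :
    heisRep q α g (Finsupp.single m (1:ℂ)) =
      ((q : ℂ) ^ (-g.2.2 - g.1 * (m + 1)) * α ^ g.1) • Finsupp.single (m + g.2.1) (1:ℂ) := by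
  rw [heisRep, Finsupp.lift_apply, Finsupp.sum_single_index, one_smul]
  rw [zero_smul]

lemma heisRep_diag_apply (q : ℤ) (α : ℂ) (c : ℤ) (v : ℤ →₀ ℂ) (n : ℤ) :
    (heisRep q α (1, 0, c) v) n = ((q : ℂ) ^ (-c - (n + 1)) * α) * v n := by
  rw [heisRep, Finsupp.lift_apply, Finsupp.sum_apply, Finsupp.sum]
  simp only [Finsupp.smul_apply, Finsupp.single_apply, add_zero, smul_eq_mul]
  rw [Finset.sum_eq_single n]
  · by_cases h : n ∈ v.support
    · simp [mul_comm]
    · simp only [Finsupp.mem_support_iff, not_not] at h; simp [h]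
  · intro b _ hb; simp [hb]
  · intro h; simp only [Finsupp.mem_support_iff, not_not] at h; simp [h]

/-- For nonzero `α₁, α₂ ∈ ℂ`, the representations `ρ_{α₁}` and `ρ_{α₂}` of the discrete
Heisenberg group are isomorphic (there is a ℂ-linear bijection `Θ : V → V` with
`Θ ∘ ρ_{α₁}(g) = ρ_{α₂}(g) ∘ Θ` for all `g`) if and only if `α₁ = q^l·α₂` for some `l ∈ ℤ`;
thus the isomorphism classes are parametrized by the elliptic curve `ℂ*/q^ℤ`. -/
theorem statement11 (q : ℤ) (hq : 2 ≤ q) (α₁ α₂ : ℂ) (h₁ : α₁ ≠ 0) (h₂ : α₂ ≠ 0) :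
    (∃ Θ : (ℤ →₀ ℂ) ≃ₗ[ℂ] (ℤ →₀ ℂ),
      ∀ g : ℤ × ℤ × ℤ, ∀ v : ℤ →₀ ℂ, Θ (heisRep q α₁ g v) = heisRep q α₂ g (Θ v)) ↔
    ∃ l : ℤ, α₁ = (q : ℂ) ^ l * α₂ := by
  have hq0 : (q : ℂ) ≠ 0 := by
    exact_mod_cast (by omega : q ≠ 0)
  constructor
  · rintro ⟨Θ, hΘ⟩
    set v : ℤ →₀ ℂ := Θ (Finsupp.single 0 1) with hv
    have hv0 : v ≠ 0 := by
      rw [hv, LinearEquiv.map_ne_zero_iff]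
      simp only [ne_eq, Finsupp.single_eq_zero]
      exact one_ne_zero
    obtain ⟨n, hvn⟩ : ∃ n, v n ≠ 0 := by
      by_contra h
      push_neg at h
      exact hv0 (Finsupp.ext fun n => h n)
    have e1 := hΘ (1, 0, 0) (Finsupp.single 0 1)
    rw [heisRep_single, map_smul, show ((0:ℤ) + 0) = 0 from add_zero 0] at e1
    have e2 := DFunLike.congr_fun e1 n
    rw [heisRep_diag_apply] at e2
    simp only [Finsupp.smul_apply, smul_eq_mul] at e2
    have key : (q : ℂ) ^ (-(0:ℤ) - 1 * (0 + 1)) * α₁ ^ (1:ℤ)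
        = (q : ℂ) ^ (-(0:ℤ) - (n + 1)) * α₂ :=
      mul_right_cancel₀ hvn e2
    refine ⟨-n, ?_⟩
    have : (q : ℂ) ^ (-n) * α₂ = α₁ := by
      calc (q : ℂ) ^ (-n) * α₂
          = (q : ℂ) ^ (1 : ℤ) * ((q : ℂ) ^ (-(0:ℤ) - (n + 1)) * α₂) := by
            rw [← mul_assoc, ← zpow_add₀ hq0]; congr 2; ring
        _ = (q : ℂ) ^ (1 : ℤ) * ((q : ℂ) ^ (-(0:ℤ) - 1 * (0 + 1)) * α₁ ^ (1:ℤ)) := by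
            rw [← key]
        _ = α₁ := by rw [← mul_assoc, ← zpow_add₀ hq0]; norm_num
    exact this.symm
  · rintro ⟨l, hl⟩
    refine ⟨Finsupp.domLCongr (Equiv.subRight l), ?_⟩
    have key : ∀ (g : ℤ × ℤ × ℤ) (m : ℤ),
        (Finsupp.domLCongr (Equiv.subRight l) : (ℤ →₀ ℂ) ≃ₗ[ℂ] (ℤ →₀ ℂ))
            (heisRep q α₁ g (Finsupp.single m 1)) =
          heisRep q α₂ g ((Finsupp.domLCongr (Equiv.subRight l) :
            (ℤ →₀ ℂ) ≃ₗ[ℂ] (ℤ →₀ ℂ)) (Finsupp.single m 1)) := by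
      intro g m
      rw [heisRep_single, map_smul, Finsupp.domLCongr_single, Finsupp.domLCongr_single,
        heisRep_single]
      simp only [Equiv.subRight_apply]
      rw [show m + g.2.1 - l = m - l + g.2.1 by ring]
      congr 1
      rw [hl, mul_zpow, ← zpow_mul, ← mul_assoc, ← zpow_add₀ hq0]
      congr 2
      ring
    intro g v
    induction v using Finsupp.induction_linear with
    | zero => simp
    | add f g hf hg => simp only [map_add, hf, hg]
    | single m c =>
      have : (Finsupp.single m c : ℤ →₀ ℂ) = c • Finsupp.single m 1 := by
        rw [Finsupp.smul_single, smul_eq_mul, mul_one]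
      rw [this, map_smul, map_smul, map_smul, key, map_smul]
end

section
/- For every d ∈ ℤ, the map R_d : G → G defined by R_d(a,b,c) = (a + d·b, b, c + b(b−1)d/2) is a group automorphism of the discrete Heisenberg group G, and d ↦ R_d is a group homomorphism from ℤ to Aut(G): R_0 = id and R_{d₁+d₂} = R_{d₁} ∘ R_{d₂} for all d₁, d₂ ∈ ℤ. -/
/-- The map `R_d : G → G`, `R_d(a,b,c) = (a + d·b, b, c + b(b−1)d/2)` (note that
`b(b−1)d/2` is an exact integer division since `b(b−1)` is even). -/
def heisAut (d : ℤ) (x : ℤ × ℤ × ℤ) : ℤ × ℤ × ℤ :=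
  (x.1 + d * x.2.1, x.2.1, x.2.2 + x.2.1 * (x.2.1 - 1) * d / 2)

lemma even_key (n : ℤ) : ∃ k : ℤ, n * (n - 1) = 2 * k := by
  rcases Int.even_or_odd n with ⟨k, hk⟩ | ⟨k, hk⟩
  · exact ⟨k * (n - 1), by subst hk; ring⟩
  · exact ⟨n * k, by subst hk; ring⟩

lemma div_key (n d : ℤ) (k : ℤ) (h : n = 2 * k) : n * d / 2 = k * d := by
  subst h
  rw [mul_assoc, Int.mul_ediv_cancel_left _ (by norm_num)]

lemma comp_key (d₁ d₂ : ℤ) : heisAut (d₁ + d₂) = heisAut d₁ ∘ heisAut d₂ := by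
  funext x
  obtain ⟨a, ha⟩ := even_key x.2.1
  simp only [heisAut, Function.comp_apply, Prod.mk.injEq]
  refine ⟨by ring, trivial, ?_⟩
  rw [div_key _ _ _ ha, div_key _ _ _ ha, div_key _ _ _ ha]
  ring

lemma zero_key : heisAut 0 = id := by
  funext x
  simp [heisAut]

/-- Each `R_d` is a group automorphism of the discrete Heisenberg group, and `d ↦ R_d` is a
group homomorphism `ℤ → Aut(G)`: `R_0 = id` and `R_{d₁+d₂} = R_{d₁} ∘ R_{d₂}`. -/
theorem statement12 :
    (∀ d : ℤ, Function.Bijective (heisAut d)) ∧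
    (∀ d : ℤ, ∀ x y : ℤ × ℤ × ℤ,
      heisAut d (hmul x y) = hmul (heisAut d x) (heisAut d y)) ∧
    heisAut 0 = id ∧
    (∀ d₁ d₂ : ℤ, heisAut (d₁ + d₂) = heisAut d₁ ∘ heisAut d₂) := by
  refine ⟨?_, ?_, zero_key, comp_key⟩
  · intro d
    have h1 : heisAut d ∘ heisAut (-d) = id := by
      rw [← comp_key]; simpa using zero_key
    have h2 : heisAut (-d) ∘ heisAut d = id := by
      rw [← comp_key]; simpa using zero_key
    exact Function.bijective_iff_has_inverse.2
      ⟨heisAut (-d), congrFun h2, congrFun h1⟩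
  · intro d x y
    obtain ⟨a, ha⟩ := even_key x.2.1
    obtain ⟨b, hb⟩ := even_key y.2.1
    have hab : (x.2.1 + y.2.1) * ((x.2.1 + y.2.1) - 1) =
        2 * (a + b + x.2.1 * y.2.1) := by
      have := ha; have := hb; nlinarith [ha, hb]
    simp only [heisAut, hmul, Prod.mk.injEq]
    refine ⟨by ring, trivial, ?_⟩
    rw [div_key _ _ _ hab, div_key _ _ _ ha, div_key _ _ _ hb]
    ring
end

section
/- The map M sending (a,b,c,d) ∈ ℤ⁴ to the 4×4 integer matrix with rows (1, d, a, c), (0, 1, b, b(b−1)/2), (0, 0, 1, b), (0, 0, 0, 1) is injective and multiplicative for the extended group law: M(x ⋆ y) = M(x)·M(y) for all x, y ∈ ℤ⁴, where ⋆ denotes the multiplication of G̃; in particular each M(x) is an invertible (unipotent upper triangular) matrix and M realizes G̃ as a subgroup of GL(4,ℤ). -/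
/-- Multiplication of the extended group `G̃ = Heis(3,ℤ) ⋊ ℤ` on `ℤ⁴`:
`(a₁,b₁,c₁,d₁) ⋆ (a₂,b₂,c₂,d₂) =
  (a₁+a₂+d₁·b₂, b₁+b₂, c₁+c₂+b₂(b₂−1)d₁/2 + a₁·b₂, d₁+d₂)`
(the division by `2` is exact since `b₂(b₂−1)` is even). -/
def tmul (x y : ℤ × ℤ × ℤ × ℤ) : ℤ × ℤ × ℤ × ℤ :=
  (x.1 + y.1 + x.2.2.2 * y.2.1, x.2.1 + y.2.1,
    x.2.2.1 + y.2.2.1 + y.2.1 * (y.2.1 - 1) * x.2.2.2 / 2 + x.1 * y.2.1,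
    x.2.2.2 + y.2.2.2)

/-- The matrix realization of `G̃`: `(a,b,c,d)` goes to the unipotent upper triangular
matrix with rows `(1,d,a,c)`, `(0,1,b,b(b−1)/2)`, `(0,0,1,b)`, `(0,0,0,1)`. -/
def matRep (x : ℤ × ℤ × ℤ × ℤ) : Matrix (Fin 4) (Fin 4) ℤ :=
  !![1, x.2.2.2, x.1, x.2.2.1;
     0, 1, x.2.1, x.2.1 * (x.2.1 - 1) / 2;
     0, 0, 1, x.2.1;
     0, 0, 0, 1]

lemma evenb (b : ℤ) : Even (b * (b - 1)) := by
  rcases Int.even_or_odd b with h | h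
  · exact h.mul_right _
  · have he : Even (b - 1) := by simpa using h.sub_odd odd_one
    exact he.mul_left _

lemma lemA (b d : ℤ) : b * (b - 1) * d / 2 = d * (b * (b - 1) / 2) := by
  obtain ⟨k, hk⟩ := evenb b
  have h1 : k + k = 2 * k := by ring
  rw [hk, h1]
  have h2 : 2 * k * d = 2 * (k * d) := by ring
  rw [h2, Int.mul_ediv_cancel_left _ two_ne_zero, Int.mul_ediv_cancel_left _ two_ne_zero]
  ring

lemma lemB (p q : ℤ) : (p + q) * ((p + q) - 1) / 2 = p * (p - 1) / 2 + p * q + q * (q - 1) / 2 := by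
  obtain ⟨k, hk⟩ := evenb p
  obtain ⟨l, hl⟩ := evenb q
  have h1 : (p + q) * ((p + q) - 1) = p * (p - 1) + 2 * (p * q) + q * (q - 1) := by ring
  rw [h1, hk, hl]
  generalize p * q = m
  omega

/-- The map `M` is injective and multiplicative, `M(x ⋆ y) = M(x)·M(y)`, and each `M(x)` is
an invertible matrix; hence `M` realizes `G̃` as a subgroup of `GL(4,ℤ)`. -/
theorem statement13 :
    Function.Injective matRep ∧
    (∀ x y : ℤ × ℤ × ℤ × ℤ, matRep (tmul x y) = matRep x * matRep y) ∧
    (∀ x : ℤ × ℤ × ℤ × ℤ, IsUnit (matRep x)) := by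
  refine ⟨?_, ?_, ?_⟩
  · rintro ⟨a1, b1, c1, d1⟩ ⟨a2, b2, c2, d2⟩ h
    have h02 := congrFun (congrFun h 0) 2
    have h23 := congrFun (congrFun h 2) 3
    have h03 := congrFun (congrFun h 0) 3
    have h01 := congrFun (congrFun h 0) 1
    simp [matRep] at h02 h23 h03 h01
    simp_all
  · rintro ⟨a1, b1, c1, d1⟩ ⟨a2, b2, c2, d2⟩
    ext i j
    fin_cases i <;> fin_cases j <;>
      simp [matRep, tmul, Matrix.mul_apply, Fin.sum_univ_four, Matrix.vecHead,
        Matrix.vecTail] <;>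
      first
        | ring1
        | omega
        | (rw [lemA b2 d1]; ring1)
        | (rw [lemB b1 b2]; ring1)
  · intro x
    rw [Matrix.isUnit_iff_isUnit_det]
    have h : (matRep x).det = 1 := by
      simp [matRep, Matrix.det_succ_row_zero, Fin.sum_univ_succ]
    simp [matRep] at h ⊢
    simp [h]
end

section
/- The set ℤ⁴ with the multiplication ⋆ is a group, and this group G̃ is nilpotent of nilpotency class exactly 3: the fourth term of its lower central series is trivial while the third term is nontrivial (indeed for x = (0,0,0,1), y = (0,1,0,0) one has [x,y] = (1,0,−1,0) and [[x,y],y] = (0,0,1,0) ≠ identity). -/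
section Helpers

private lemma two_h' (b : ℤ) : 2 * (b * (b - 1) / 2) = b * (b - 1) := by
  obtain ⟨k, hk⟩ : 2 ∣ b * (b - 1) := by
    rcases Int.even_mul_pred_self b with ⟨k, hk⟩
    exact ⟨k, by omega⟩
  rw [hk, Int.mul_ediv_cancel_left _ two_ne_zero]

private lemma key14 (b d : ℤ) : b * (b - 1) * d / 2 = b * (b - 1) / 2 * d := by
  obtain ⟨k, hk⟩ : 2 ∣ b * (b - 1) := by
    rcases Int.even_mul_pred_self b with ⟨k, hk⟩
    exact ⟨k, by omega⟩
  rw [hk, mul_assoc, Int.mul_ediv_cancel_left _ two_ne_zero,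
    Int.mul_ediv_cancel_left _ two_ne_zero]

private lemma key14' (b d : ℤ) : b * (b + 1) * d / 2 = (b + 1) * (b + 1 - 1) / 2 * d := by
  rw [← key14]; ring_nf

private lemma hadd14 (b c : ℤ) :
    (b + c) * (b + c - 1) / 2 = b * (b - 1) / 2 + c * (c - 1) / 2 + b * c := by
  have h := two_h' (b + c); have h1 := two_h' b; have h2 := two_h' c
  nlinarith [h, h1, h2]

private lemma hneg14 (b : ℤ) : -b * (-b - 1) / 2 = b * (b - 1) / 2 + b := by
  have h := two_h' (-b); have h1 := two_h' b
  nlinarith [h, h1]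

end Helpers

/-- The inverse for `⋆`: `(a,b,c,d)⁻¹ = (d·b − a, −b, a·b − c − b(b+1)d/2, −d)`. -/
def tinv (x : ℤ × ℤ × ℤ × ℤ) : ℤ × ℤ × ℤ × ℤ :=
  (x.2.2.2 * x.2.1 - x.1, -x.2.1,
    x.1 * x.2.1 - x.2.2.1 - x.2.1 * (x.2.1 + 1) * x.2.2.2 / 2, -x.2.2.2)

/-- The commutator `[x,y] = x ⋆ y ⋆ x⁻¹ ⋆ y⁻¹` in `G̃`. -/
def tbrk (x y : ℤ × ℤ × ℤ × ℤ) : ℤ × ℤ × ℤ × ℤ :=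
  tmul (tmul (tmul x y) (tinv x)) (tinv y)

private lemma tbrk_shape (x y : ℤ × ℤ × ℤ × ℤ) :
    tbrk x y = ((tbrk x y).1, 0, (tbrk x y).2.2.1, 0) := by
  obtain ⟨a1,b1,c1,d1⟩ := x; obtain ⟨a2,b2,c2,d2⟩ := y
  simp only [tbrk, tmul, tinv, Prod.mk.injEq]
  exact ⟨trivial, by ring, trivial, by ring⟩

private lemma tbrk_step (A C : ℤ) (z : ℤ × ℤ × ℤ × ℤ) :
    tbrk (A, 0, C, 0) z = (0, 0, A * z.2.1, 0) := by
  obtain ⟨a,b,c,d⟩ := z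
  simp only [tbrk, tmul, tinv, Prod.mk.injEq, key14, key14', hadd14, hneg14]
  norm_num
  and_intros <;> ring

private lemma tbrk_central (m : ℤ) (w : ℤ × ℤ × ℤ × ℤ) :
    tbrk (0, 0, m, 0) w = (0, 0, 0, 0) := by
  obtain ⟨a,b,c,d⟩ := w
  simp only [tbrk, tmul, tinv, Prod.mk.injEq, key14, key14', hadd14, hneg14]
  norm_num
  and_intros <;> ring

/-- `(ℤ⁴, ⋆)` is a group (associative, with identity `(0,0,0,0)` and two-sided inverses),
and this group `G̃` is nilpotent of class exactly `3`: all quadruple commutators are trivial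
(the fourth term of the lower central series vanishes), while for `x = (0,0,0,1)`,
`y = (0,1,0,0)` one has `[x,y] = (1,0,−1,0)` and `[[x,y],y] = (0,0,1,0) ≠ identity`, so the
third term is nontrivial. -/
theorem statement14 :
    (∀ x y z : ℤ × ℤ × ℤ × ℤ, tmul (tmul x y) z = tmul x (tmul y z)) ∧
    (∀ x : ℤ × ℤ × ℤ × ℤ, tmul (0, 0, 0, 0) x = x ∧ tmul x (0, 0, 0, 0) = x) ∧
    (∀ x : ℤ × ℤ × ℤ × ℤ,
      tmul x (tinv x) = (0, 0, 0, 0) ∧ tmul (tinv x) x = (0, 0, 0, 0)) ∧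
    (∀ x y z w : ℤ × ℤ × ℤ × ℤ, tbrk (tbrk (tbrk x y) z) w = (0, 0, 0, 0)) ∧
    tbrk (0, 0, 0, 1) (0, 1, 0, 0) = (1, 0, -1, 0) ∧
    tbrk (tbrk (0, 0, 0, 1) (0, 1, 0, 0)) (0, 1, 0, 0) = (0, 0, 1, 0) ∧
    ((0, 0, 1, 0) : ℤ × ℤ × ℤ × ℤ) ≠ (0, 0, 0, 0) := by
  refine ⟨?_, ?_, ?_, ?_, ?_, ?_, ?_⟩
  · intro x y z
    obtain ⟨a1,b1,c1,d1⟩ := x; obtain ⟨a2,b2,c2,d2⟩ := y; obtain ⟨a3,b3,c3,d3⟩ := z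
    simp only [tmul, Prod.mk.injEq, key14, hadd14]
    refine ⟨by ring, by ring, by ring, by ring⟩
  · intro x
    obtain ⟨a,b,c,d⟩ := x
    simp only [tmul, Prod.mk.injEq]
    norm_num
  · intro x
    obtain ⟨a,b,c,d⟩ := x
    simp only [tmul, tinv, Prod.mk.injEq, key14, key14', hadd14, hneg14]
    norm_num
    exact ⟨by ring, by linear_combination (-d) * two_h' b⟩
  · intro x y z w
    rw [tbrk_shape x y, tbrk_step, tbrk_central]
  · decide
  · decide
  · decide
end

section
/- The map ρ̃_α is a representation of the extended group G̃ on V: each ρ̃_α(a,b,c,d) is a ℂ-linear automorphism of V, ρ̃_α(x ⋆ y) = ρ̃_α(x) ∘ ρ̃_α(y) for all x, y ∈ G̃, and the restriction of ρ̃_α to the subgroup {(a,b,c,0)} coincides with the representation ρ_α of the Heisenberg group, i.e. ρ̃_α(a,b,c,0)(Δ_l) = q^{−c−a(l+1)}·α^a·Δ_{l+b}. -/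
/-- The operator `ρ̃_α(a,b,c,d)` on the space `V = ℤ →₀ ℂ` of finitely supported
functions, defined on the standard basis by
`ρ̃_α(a,b,c,d)(Δ_l) = q^{−c−a(l+1)−d·l(l+1)/2}·α^{a+d·l}·Δ_{l+b}`. -/
noncomputable def extRep (q : ℤ) (α : ℂ) (x : ℤ × ℤ × ℤ × ℤ) :
    (ℤ →₀ ℂ) →ₗ[ℂ] (ℤ →₀ ℂ) :=
  Finsupp.lift (ℤ →₀ ℂ) ℂ ℤ fun l =>
    ((q : ℂ) ^ (-x.2.2.1 - x.1 * (l + 1) - x.2.2.2 * (l * (l + 1) / 2)) *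
        α ^ (x.1 + x.2.2.2 * l)) • Finsupp.single (l + x.2.1) (1 : ℂ)

lemma half_eq {a b : ℤ} (h : 2 * a = 2 * b) : a = b := by omega

lemma extRep_single (q : ℤ) (α : ℂ) (x : ℤ × ℤ × ℤ × ℤ) (l : ℤ) :
    extRep q α x (Finsupp.single l 1) =
      ((q : ℂ) ^ (-x.2.2.1 - x.1 * (l + 1) - x.2.2.2 * (l * (l + 1) / 2)) *
        α ^ (x.1 + x.2.2.2 * l)) • Finsupp.single (l + x.2.1) 1 := by
  simp only [extRep, Finsupp.lift_apply]
  rw [Finsupp.sum_single_index] <;> simp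

lemma expId (a₁ c₁ d₁ a₂ b₂ c₂ d₂ l : ℤ) :
    -(c₁ + c₂ + b₂ * (b₂ - 1) * d₁ / 2 + a₁ * b₂) - (a₁ + a₂ + d₁ * b₂) * (l + 1)
        - (d₁ + d₂) * (l * (l + 1) / 2)
      = (-c₂ - a₂ * (l + 1) - d₂ * (l * (l + 1) / 2))
        + (-c₁ - a₁ * ((l + b₂) + 1) - d₁ * ((l + b₂) * ((l + b₂) + 1) / 2)) := by
  obtain ⟨u, hu⟩ := Int.even_mul_succ_self l
  obtain ⟨v, hv⟩ := Int.even_mul_succ_self (l + b₂)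
  obtain ⟨w, hw⟩ : Even (b₂ * (b₂ - 1)) := by
    rw [mul_comm]; have := Int.even_mul_succ_self (b₂ - 1); simpa using this
  have h1 : l * (l + 1) / 2 = u := by rw [hu]; omega
  have h2 : (l + b₂) * ((l + b₂) + 1) / 2 = v := by rw [hv]; omega
  have h3 : b₂ * (b₂ - 1) * d₁ / 2 = w * d₁ := by
    rw [show b₂ * (b₂ - 1) * d₁ = 2 * (w * d₁) by linear_combination d₁ * hw]
    exact Int.mul_ediv_cancel_left _ two_ne_zero
  rw [h1, h2, h3]
  apply half_eq
  linear_combination d₁ * hu + d₁ * hw - d₁ * hv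

lemma extRep_mul (q : ℤ) (hq0 : (q : ℂ) ≠ 0) (α : ℂ) (hα : α ≠ 0)
    (x y : ℤ × ℤ × ℤ × ℤ) :
    extRep q α (tmul x y) = (extRep q α x).comp (extRep q α y) := by
  obtain ⟨a₁, b₁, c₁, d₁⟩ := x
  obtain ⟨a₂, b₂, c₂, d₂⟩ := y
  apply Finsupp.lhom_ext
  intro l m
  rw [show (Finsupp.single l m : ℤ →₀ ℂ) = m • Finsupp.single l 1 by
    rw [Finsupp.smul_single', mul_one]]
  simp only [map_smul, LinearMap.comp_apply]
  congr 1
  rw [extRep_single, extRep_single, map_smul, extRep_single]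
  simp only [tmul, smul_smul]
  congr 1
  · rw [show -(c₁ + c₂ + b₂ * (b₂ - 1) * d₁ / 2 + a₁ * b₂) - (a₁ + a₂ + d₁ * b₂) * (l + 1)
        - (d₁ + d₂) * (l * (l + 1) / 2)
      = (-c₂ - a₂ * (l + 1) - d₂ * (l * (l + 1) / 2))
        + (-c₁ - a₁ * ((l + b₂) + 1) - d₁ * ((l + b₂) * ((l + b₂) + 1) / 2)) from
      expId a₁ c₁ d₁ a₂ b₂ c₂ d₂ l,
      show a₁ + a₂ + d₁ * b₂ + (d₁ + d₂) * l
        = (a₂ + d₂ * l) + (a₁ + d₁ * (l + b₂)) by ring,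
      zpow_add₀ hq0, zpow_add₀ hα]
    ring
  · congr 1
    ring

def ginv (x : ℤ × ℤ × ℤ × ℤ) : ℤ × ℤ × ℤ × ℤ :=
  (-x.1 + x.2.2.2 * x.2.1, -x.2.1,
    -x.2.2.1 - x.2.1 * (x.2.1 + 1) * x.2.2.2 / 2 + x.1 * x.2.1, -x.2.2.2)

lemma tmul_ginv (x : ℤ × ℤ × ℤ × ℤ) : tmul x (ginv x) = (0, 0, 0, 0) := by
  obtain ⟨a, b, c, d⟩ := x
  simp only [tmul, ginv, Prod.mk.injEq]
  refine ⟨by ring, by ring, ?_, by ring⟩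
  rw [show -b * (-b - 1) * d = b * (b + 1) * d by ring]
  generalize b * (b + 1) * d / 2 = T
  ring

lemma ginv_tmul (x : ℤ × ℤ × ℤ × ℤ) : tmul (ginv x) x = (0, 0, 0, 0) := by
  obtain ⟨a, b, c, d⟩ := x
  simp only [tmul, ginv, Prod.mk.injEq]
  refine ⟨by ring, by ring, ?_, by ring⟩
  obtain ⟨u, hu⟩ : Even (b * (b + 1)) := Int.even_mul_succ_self b
  obtain ⟨v, hv⟩ : Even (b * (b - 1)) := by
    rw [mul_comm]; have := Int.even_mul_succ_self (b - 1); simpa using this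
  have h1 : b * (b + 1) * d / 2 = u * d := by
    rw [show b * (b + 1) * d = 2 * (u * d) by linear_combination d * hu]
    exact Int.mul_ediv_cancel_left _ two_ne_zero
  have h2 : b * (b - 1) * -d / 2 = -(v * d) := by
    rw [show b * (b - 1) * -d = 2 * -(v * d) by linear_combination (-d) * hv]
    exact Int.mul_ediv_cancel_left _ two_ne_zero
  rw [h1, h2]
  apply half_eq
  linear_combination d * hu + d * hv

lemma extRep_one (q : ℤ) (α : ℂ) :
    extRep q α (0, 0, 0, 0) = LinearMap.id := by
  apply Finsupp.lhom_ext
  intro l m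
  rw [show (Finsupp.single l m : ℤ →₀ ℂ) = m • Finsupp.single l 1 by
    rw [Finsupp.smul_single', mul_one]]
  simp only [map_smul, LinearMap.id_apply]
  rw [extRep_single]
  norm_num

lemma extRep_bij (q : ℤ) (hq0 : (q : ℂ) ≠ 0) (α : ℂ) (hα : α ≠ 0)
    (x : ℤ × ℤ × ℤ × ℤ) : Function.Bijective (extRep q α x) := by
  have h1 : (extRep q α (ginv x)).comp (extRep q α x) = LinearMap.id := by
    rw [← extRep_mul q hq0 α hα, ginv_tmul, extRep_one]
  have h2 : (extRep q α x).comp (extRep q α (ginv x)) = LinearMap.id := by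
    rw [← extRep_mul q hq0 α hα, tmul_ginv, extRep_one]
  constructor
  · exact Function.LeftInverse.injective (g := extRep q α (ginv x))
      fun v => LinearMap.congr_fun h1 v
  · exact Function.RightInverse.surjective (g := extRep q α (ginv x))
      fun v => LinearMap.congr_fun h2 v


/-- `ρ̃_α` is a representation of the extended group `G̃` on `V`: each `ρ̃_α(x)` is a
ℂ-linear automorphism of `V`, `ρ̃_α(x ⋆ y) = ρ̃_α(x) ∘ ρ̃_α(y)`, and the restriction to the
subgroup `{(a,b,c,0)}` is the representation `ρ_α` of the Heisenberg group:
`ρ̃_α(a,b,c,0)(Δ_l) = q^{−c−a(l+1)}·α^a·Δ_{l+b}`. -/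
theorem statement15 (q : ℤ) (hq : 2 ≤ q) (α : ℂ) (hα : α ≠ 0) :
    (∀ x : ℤ × ℤ × ℤ × ℤ, ∀ l : ℤ,
      extRep q α x (Finsupp.single l 1) =
        ((q : ℂ) ^ (-x.2.2.1 - x.1 * (l + 1) - x.2.2.2 * (l * (l + 1) / 2)) *
          α ^ (x.1 + x.2.2.2 * l)) • Finsupp.single (l + x.2.1) 1) ∧
    (∀ x : ℤ × ℤ × ℤ × ℤ, Function.Bijective (extRep q α x)) ∧
    (∀ x y : ℤ × ℤ × ℤ × ℤ,
      extRep q α (tmul x y) = (extRep q α x).comp (extRep q α y)) ∧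
    (∀ a b c l : ℤ,
      extRep q α (a, b, c, 0) (Finsupp.single l 1) =
        ((q : ℂ) ^ (-c - a * (l + 1)) * α ^ a) • Finsupp.single (l + b) 1) := by
  have hq0 : (q : ℂ) ≠ 0 := by
    have : q ≠ 0 := by omega
    exact_mod_cast this
  refine ⟨fun x l => extRep_single q α x l, fun x => extRep_bij q hq0 α hα x,
    fun x y => extRep_mul q hq0 α hα x y, fun a b c l => ?_⟩
  rw [extRep_single]
  norm_num
end

section
/- Let q ≥ 2 be an integer, α ∈ ℂ with α ≠ 0, a, c ∈ ℤ, and d ≥ 1 an integer. Define tr_β(a,0,c,d) = q^{−c−a}·β^a·Σ_{l∈ℤ} q^{−a·l − d·l(l+1)/2}·β^{d·l} for β ∈ ℂ* (the series converges absolutely). Then tr_{q·α}(a,0,c,d) = α^d · tr_α(a,0,c,d). -/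
/-- The trace `tr_β(a,0,c,d)` of the element `(a,0,c,d)` of the extended group `G̃` on the
representation `ρ̃_β`, with respect to the distinguished basis `(Δ_l)_{l∈ℤ}`:
`tr_β(a,0,c,d) = q^{−c−a}·β^a·Σ_{l∈ℤ} q^{−a·l − d·l(l+1)/2}·β^{d·l}`. -/
noncomputable def trBeta (q a c d : ℤ) (β : ℂ) : ℂ :=
  (q : ℂ) ^ (-c - a) * β ^ a *
    ∑' l : ℤ, (q : ℂ) ^ (-(a * l) - d * (l * (l + 1) / 2)) * β ^ (d * l)

/-- For `q ≥ 2`, `α ≠ 0`, `a, c ∈ ℤ` and `d ≥ 1`: `tr_{q·α}(a,0,c,d) = α^d·tr_α(a,0,c,d)`. -/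
theorem statement18 (q : ℤ) (hq : 2 ≤ q) (α : ℂ) (hα : α ≠ 0) (a c d : ℤ) (hd : 1 ≤ d) :
    trBeta q a c d ((q : ℂ) * α) = α ^ d * trBeta q a c d α := by
  have hq0 : (q : ℂ) ≠ 0 := by
    exact_mod_cast (by omega : q ≠ 0)
  -- exact division identity
  have hdiv : ∀ m : ℤ, (m + 1) * ((m + 1) + 1) / 2 = m * (m + 1) / 2 + (m + 1) := by
    intro m
    have h : (m + 1) * ((m + 1) + 1) = m * (m + 1) + (m + 1) * 2 := by ring
    rw [h, Int.add_mul_ediv_right _ _ (by norm_num : (2:ℤ) ≠ 0)]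
  have key : (∑' l : ℤ, (q : ℂ) ^ (-(a * l) - d * (l * (l + 1) / 2)) * ((q : ℂ) * α) ^ (d * l))
      = (q : ℂ) ^ (-a) * α ^ d *
        ∑' l : ℤ, (q : ℂ) ^ (-(a * l) - d * (l * (l + 1) / 2)) * α ^ (d * l) := by
    rw [← tsum_mul_left, ← (Equiv.addRight (1 : ℤ)).tsum_eq]
    refine tsum_congr fun m => ?_
    simp only [Equiv.coe_addRight]
    have hqa0 : (q : ℂ) * α ≠ 0 := mul_ne_zero hq0 hα
    rw [mul_zpow]
    have hE : -(a * (m + 1)) - d * ((m + 1) * ((m + 1) + 1) / 2) + d * (m + 1)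
        = -a + (-(a * m) - d * (m * (m + 1) / 2)) := by
      rw [hdiv m]; ring
    have hq' : (q : ℂ) ^ (-(a * (m + 1)) - d * ((m + 1) * ((m + 1) + 1) / 2)) *
        (q : ℂ) ^ (d * (m + 1)) = (q : ℂ) ^ (-a) * (q : ℂ) ^ (-(a * m) - d * (m * (m + 1) / 2)) := by
      rw [← zpow_add₀ hq0, hE, zpow_add₀ hq0]
    have hα' : α ^ (d * (m + 1)) = α ^ d * α ^ (d * m) := by
      rw [← zpow_add₀ hα]; ring_nf
    calc (q : ℂ) ^ (-(a * (m + 1)) - d * ((m + 1) * ((m + 1) + 1) / 2)) *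
          ((q : ℂ) ^ (d * (m + 1)) * α ^ (d * (m + 1)))
        = ((q : ℂ) ^ (-(a * (m + 1)) - d * ((m + 1) * ((m + 1) + 1) / 2)) *
          (q : ℂ) ^ (d * (m + 1))) * α ^ (d * (m + 1)) := by ring
      _ = ((q : ℂ) ^ (-a) * (q : ℂ) ^ (-(a * m) - d * (m * (m + 1) / 2))) *
          (α ^ d * α ^ (d * m)) := by rw [hq', hα']
      _ = _ := by ring
  unfold trBeta
  rw [key, mul_zpow]
  have h1 : (q : ℂ) ^ a * (q : ℂ) ^ (-a) = 1 := by
    rw [← zpow_add₀ hq0, add_neg_cancel, zpow_zero]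
  calc (q : ℂ) ^ (-c - a) * ((q : ℂ) ^ a * α ^ a) *
        ((q : ℂ) ^ (-a) * α ^ d * ∑' l : ℤ, (q : ℂ) ^ (-(a * l) - d * (l * (l + 1) / 2)) * α ^ (d * l))
      = ((q : ℂ) ^ a * (q : ℂ) ^ (-a)) * (α ^ d * ((q : ℂ) ^ (-c - a) * α ^ a *
        ∑' l : ℤ, (q : ℂ) ^ (-(a * l) - d * (l * (l + 1) / 2)) * α ^ (d * l))) := by ring
    _ = _ := by rw [h1, one_mul]
end
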